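/- Let N ≥ 1, let P be an N×N real matrix with nonnegative entries whose rows each sum to 1 (row-stochastic), and let p ∈ (0,1). Define the PageRank vector π ∈ ℝ^N by π_i = (p/N) · Σ_{j=1}^N Σ_{k=0}^∞ (1−p)^k (P^k)_{j i} (the inner series converges absolutely since every entry of P^k lies in [0,1]). Then π is the stationary distribution of the PageRank transition matrix P̃ := (1−p)P + (p/N)E, where E is the all-ones N×N matrix: namely Σ_{i=1}^N π_i = 1 and, for every i, Σ_{j=1}^N π_j P̃_{j i} = π_i. -/

import Mathlib

open scoped BigOperators

theorem pagerank_stationary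
    (N : ℕ) (hN : 1 ≤ N)
    (P : Matrix (Fin N) (Fin N) ℝ)
    (hnonneg : ∀ i j, 0 ≤ P i j)
    (hrow : ∀ i, ∑ j, P i j = 1)
    (p : ℝ) (hp : p ∈ Set.Ioo (0 : ℝ) 1)
    (π : Fin N → ℝ)
    (hπ : ∀ i, π i = (p / N) * ∑ j, ∑' k : ℕ, (1 - p) ^ k * (P ^ k) j i) :
    (∑ i, π i = 1) ∧
      ∀ i, ∑ j, π j * ((1 - p) * P j i + p / N) = π i := by
  obtain ⟨hp0, hp1⟩ := hp
  have hq0 : (0:ℝ) ≤ 1 - p := by linarith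
  have hq1 : (1:ℝ) - p < 1 := by linarith
  have hpne : (p:ℝ) ≠ 0 := ne_of_gt hp0
  have hNpos : (0:ℝ) < N := by exact_mod_cast hN
  have hNne : (N:ℝ) ≠ 0 := ne_of_gt hNpos
  -- entries of P^k nonneg
  have hpow_nonneg : ∀ (k : ℕ) (j i : Fin N), 0 ≤ (P ^ k) j i := by
    intro k
    induction k with
    | zero => intro j i; simp [Matrix.one_apply]; positivity
    | succ k ih =>
      intro j i
      rw [pow_succ, Matrix.mul_apply]
      exact Finset.sum_nonneg fun m _ => mul_nonneg (ih j m) (hnonneg m i)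
  -- row sums of P^k are 1
  have hrowpow : ∀ (k : ℕ) (j : Fin N), ∑ i, (P ^ k) j i = 1 := by
    intro k
    induction k with
    | zero => intro j; simp [Matrix.one_apply]
    | succ k ih =>
      intro j
      simp only [pow_succ, Matrix.mul_apply]
      rw [Finset.sum_comm]
      calc ∑ m, ∑ i, (P ^ k) j m * P m i
          = ∑ m, (P ^ k) j m * ∑ i, P m i := by
            simp [Finset.mul_sum]
        _ = 1 := by simp [hrow, ih j]
  have hle1 : ∀ (k : ℕ) (j i : Fin N), (P ^ k) j i ≤ 1 := by
    intro k j i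
    calc (P ^ k) j i ≤ ∑ i', (P ^ k) j i' :=
          Finset.single_le_sum (fun i' _ => hpow_nonneg k j i') (Finset.mem_univ i)
      _ = 1 := hrowpow k j
  have hgeom : Summable (fun k : ℕ => (1 - p) ^ k) :=
    summable_geometric_of_lt_one hq0 hq1
  have hsumm : ∀ (j i : Fin N), Summable (fun k : ℕ => (1 - p) ^ k * (P ^ k) j i) := by
    intro j i
    refine Summable.of_nonneg_of_le (fun k => mul_nonneg (pow_nonneg hq0 k) (hpow_nonneg k j i))
      (fun k => ?_) hgeom
    calc (1 - p) ^ k * (P ^ k) j i ≤ (1 - p) ^ k * 1 :=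
          mul_le_mul_of_nonneg_left (hle1 k j i) (pow_nonneg hq0 k)
      _ = (1 - p) ^ k := mul_one _
  have htsum_geom : ∑' k : ℕ, (1 - p) ^ k = p⁻¹ := by
    rw [tsum_geometric_of_lt_one hq0 hq1]
    ring_nf
  -- sum over i of inner double sum equals 1/p
  have hS : ∀ j : Fin N, ∑ i, ∑' k : ℕ, (1 - p) ^ k * (P ^ k) j i = p⁻¹ := by
    intro j
    rw [← Summable.tsum_finsetSum (fun i _ => hsumm j i)]
    calc ∑' k : ℕ, ∑ i, (1 - p) ^ k * (P ^ k) j i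
        = ∑' k : ℕ, (1 - p) ^ k := by
          apply tsum_congr; intro k
          rw [← Finset.mul_sum, hrowpow k j, mul_one]
      _ = p⁻¹ := htsum_geom
  have hsum1 : ∑ i, π i = 1 := by
    calc ∑ i, π i = ∑ i, (p / N) * ∑ j, ∑' k : ℕ, (1 - p) ^ k * (P ^ k) j i := by
          simp [hπ]
      _ = (p / N) * ∑ j, ∑ i, ∑' k : ℕ, (1 - p) ^ k * (P ^ k) j i := by
          rw [← Finset.mul_sum, Finset.sum_comm]
      _ = (p / N) * ∑ _j : Fin N, p⁻¹ := by
          rw [Finset.sum_congr rfl fun j _ => hS j]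
      _ = 1 := by
          rw [Finset.sum_const, Finset.card_univ, Fintype.card_fin, nsmul_eq_mul]
          field_simp
  refine ⟨hsum1, fun i => ?_⟩
  set S : Fin N → ℝ := fun i => ∑ j, ∑' k : ℕ, (1 - p) ^ k * (P ^ k) j i with hSdef
  have hπS : ∀ i, π i = (p / N) * S i := hπ
  -- key: ∑ j, S j * P j i = ∑ m, ∑' k, (1-p)^k * (P^(k+1)) m i
  have hkey : ∑ j, S j * P j i = ∑ m, ∑' k : ℕ, (1 - p) ^ k * (P ^ (k + 1)) m i := by
    calc ∑ j, S j * P j i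
        = ∑ j, ∑ m, (∑' k : ℕ, (1 - p) ^ k * (P ^ k) m j) * P j i := by
          simp [hSdef, Finset.sum_mul]
      _ = ∑ m, ∑ j, ∑' k : ℕ, ((1 - p) ^ k * (P ^ k) m j) * P j i := by
          rw [Finset.sum_comm]
          congr 1; ext j; congr 1; ext m
          rw [tsum_mul_right]
      _ = ∑ m, ∑' k : ℕ, ∑ j, ((1 - p) ^ k * (P ^ k) m j) * P j i := by
          congr 1; ext m
          rw [Summable.tsum_finsetSum (fun j _ => (hsumm m j).mul_right (P j i))]
      _ = ∑ m, ∑' k : ℕ, (1 - p) ^ k * (P ^ (k + 1)) m i := by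
          congr 1; ext m; congr 1; ext k
          rw [pow_succ, Matrix.mul_apply, Finset.mul_sum]
          congr 1; ext j; ring
  have hshift : ∀ m : Fin N,
      ∑' k : ℕ, (1 - p) ^ k * (P ^ k) m i
        = (P ^ 0) m i + (1 - p) * ∑' k : ℕ, (1 - p) ^ k * (P ^ (k + 1)) m i := by
    intro m
    rw [Summable.tsum_eq_zero_add (hsumm m i)]
    simp only [pow_zero, one_mul]
    congr 1
    rw [← tsum_mul_left]
    congr 1; ext k; ring
  have hstep : (1 - p) * ∑ j, S j * P j i = S i - 1 := by
    rw [hkey, Finset.mul_sum]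
    have : ∑ m, (1 - p) * ∑' k : ℕ, (1 - p) ^ k * (P ^ (k + 1)) m i
        = ∑ m, (∑' k : ℕ, (1 - p) ^ k * (P ^ k) m i - (P ^ 0) m i) := by
      congr 1; ext m
      rw [hshift m]; ring
    rw [this, Finset.sum_sub_distrib]
    have h0 : ∑ m, (P ^ (0:ℕ)) m i = 1 := by
      simp [Matrix.one_apply]
    rw [h0]
  calc ∑ j, π j * ((1 - p) * P j i + p / N)
      = (1 - p) * ∑ j, π j * P j i + (p / N) * ∑ j, π j := by
        rw [Finset.mul_sum, Finset.mul_sum, ← Finset.sum_add_distrib]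
        congr 1; ext j; ring
    _ = (1 - p) * ((p / N) * ∑ j, S j * P j i) + (p / N) * 1 := by
        rw [hsum1]
        congr 2
        rw [Finset.mul_sum]
        congr 1; ext j; rw [hπS j]; ring
    _ = (p / N) * (S i - 1) + (p / N) * 1 := by
        rw [← hstep]; ring
    _ = π i := by rw [hπS i]; ring
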